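/- Let v satisfy C3 (for θ' > θ, the map s ↦ e_req(s;θ) − e_req(s;θ') is weakly nondecreasing) and let c be nondecreasing and convex. Suppose θᵢ > θⱼ, efforts eᵢ*, eⱼ* give scores vᵢ* := v(θᵢ, eᵢ*) < vⱼ* := v(θⱼ, eⱼ*), and define the counterfactual efforts ẽᵢ := e_req(vⱼ*; θᵢ) and ẽⱼ := e_req(vᵢ*; θⱼ), so that ẽᵢ > eᵢ* and ẽⱼ ≤ eⱼ*. Then ẽᵢ − eᵢ* ≤ eⱼ* − ẽⱼ, and consequently c(ẽᵢ) − c(eᵢ*) ≤ c(eⱼ*) − c(ẽⱼ). -/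

import Mathlib

/-- Minimal effort to reach score `s`: `e_req(s;θ) = inf{e ≥ 0 : v(θ,e) ≥ s}`. -/
noncomputable def ereq (v : ℝ → ℝ → ℝ) (s θ : ℝ) : ℝ :=
  sInf {e | 0 ≤ e ∧ s ≤ v θ e}

/-- Effort-gap and cost comparison. Suppose `v` satisfies C3 for
the pair `θᵢ > θⱼ` (the map `s ↦ e_req(s;θⱼ) − e_req(s;θᵢ)` is weakly
nondecreasing, and the higher-capability model never needs more effort), `c`
is nondecreasing and convex, the equilibrium efforts satisfy
`eᵢ* = e_req(vᵢ*;θᵢ)`, `eⱼ* = e_req(vⱼ*;θⱼ)` with scores `vᵢ* < vⱼ*`, and the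
counterfactual efforts `ẽᵢ := e_req(vⱼ*;θᵢ)`, `ẽⱼ := e_req(vᵢ*;θⱼ)` satisfy
`ẽᵢ > eᵢ*` and `ẽⱼ ≤ eⱼ*`. Then `ẽᵢ − eᵢ* ≤ eⱼ* − ẽⱼ`, and consequently
`c(ẽᵢ) − c(eᵢ*) ≤ c(eⱼ*) − c(ẽⱼ)`. -/

lemma conv_shift (c : ℝ → ℝ) (h : ConvexOn ℝ Set.univ c) (a b t : ℝ)
    (hab : a ≤ b) (ht : 0 ≤ t) : c (a + t) - c a ≤ c (b + t) - c b := by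
  rcases eq_or_lt_of_le (show a ≤ b + t by linarith) with heq | hlt
  · have ha : a = b := by linarith
    have ht0 : t = 0 := by linarith
    simp [ha, ht0]
  · set D := b + t - a with hD
    have hDpos : 0 < D := by simp [hD]; linarith
    set l := t / D with hl
    have hl0 : 0 ≤ l := div_nonneg ht hDpos.le
    have hl1 : l ≤ 1 := by
      rw [hl, div_le_one hDpos]; linarith
    have hsum : (1 - l) + l = 1 := by ring
    have h1 := h.2 (Set.mem_univ a) (Set.mem_univ (b + t))
      (by linarith : (0:ℝ) ≤ 1 - l) hl0 hsum
    have h2 := h.2 (Set.mem_univ a) (Set.mem_univ (b + t))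
      hl0 (by linarith : (0:ℝ) ≤ 1 - l) (by ring)
    have e1 : (1 - l) • a + l • (b + t) = a + t := by
      field_simp [hl, smul_eq_mul]; have hlD : l * D = t := div_mul_cancel₀ t hDpos.ne'; linear_combination hlD
    have e2 : l • a + (1 - l) • (b + t) = b := by
      field_simp [hl, smul_eq_mul]; have hlD : l * D = t := div_mul_cancel₀ t hDpos.ne'; linear_combination -hlD
    rw [e1] at h1
    rw [e2] at h2
    simp only [smul_eq_mul] at h1 h2
    linarith

theorem stmt13 (v : ℝ → ℝ → ℝ) (c : ℝ → ℝ) (θi θj : ℝ) (hθ : θj < θi)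
    (hC3 : ∀ s s', s ≤ s' →
      ereq v s θj - ereq v s θi ≤ ereq v s' θj - ereq v s' θi)
    (hgap0 : ∀ s, ereq v s θi ≤ ereq v s θj)
    (hcmono : Monotone c) (hcconv : ConvexOn ℝ Set.univ c)
    (ei ej vi vj : ℝ) (hei0 : 0 ≤ ei) (hej0 : 0 ≤ ej)
    (hvi : vi = v θi ei) (hvj : vj = v θj ej)
    (heia : ei = ereq v vi θi) (heja : ej = ereq v vj θj)
    (hlt : vi < vj)
    (htildei : ei < ereq v vj θi) (htildej : ereq v vi θj ≤ ej) :
    ereq v vj θi - ei ≤ ej - ereq v vi θj ∧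
    c (ereq v vj θi) - c ei ≤ c ej - c (ereq v vi θj) := by
  have h1 := hC3 vi vj hlt.le
  rw [← heia, ← heja] at h1
  have hgapA : ereq v vj θi - ei ≤ ej - ereq v vi θj := by linarith
  refine ⟨hgapA, ?_⟩
  have hti : ei ≤ ereq v vi θj := by rw [heia]; exact hgap0 vi
  set t := ej - ereq v vi θj with hT
  have ht0 : (0:ℝ) ≤ t := by linarith
  have hmono1 : c (ereq v vj θi) ≤ c (ei + t) := hcmono (by linarith)
  have hshift := conv_shift c hcconv ei (ereq v vi θj) t hti ht0
  have : ereq v vi θj + t = ej := by simp [hT]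
  rw [this] at hshift
  linarith
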